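/- Let H ≠ ℕ be a numerical semigroup with Frobenius number f = f(H), let k be a field, and set R = k[[H]]. Then there exists n ≥ 1 with ω_Hⁿ = k[[t]] (equality of R-submodules of k[[t]]) if and only if f − 1 ∈ QF(H). -/

import Mathlib

set_option synthInstance.maxHeartbeats 400000
set_option maxHeartbeats 1000000

/-- The Frobenius number of a numerical semigroup `H ⊆ ℕ`: the largest natural number
not in `H` (meaningful when `H ≠ ℕ` and the complement of `H` is finite). -/
noncomputable def frobeniusNumber (H : AddSubmonoid ℕ) : ℕ :=
  sSup {x : ℕ | x ∉ H}

/-- The set of quasi-Frobenius numbers of a numerical semigroup `H`: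
`QF(H) = {x ∈ ℕ \ H : x + h ∈ H for every nonzero h ∈ H}`. -/
def QF (H : AddSubmonoid ℕ) : Set ℕ :=
  {x | x ∉ H ∧ ∀ h ∈ H, h ≠ 0 → x + h ∈ H}

/-- The semigroup power series ring `k[[H]]`: the subalgebra of `k[[t]]` of power series
whose `i`-th coefficient vanishes for all `i ∉ H`. -/
noncomputable def semigroupAlgebra (k : Type*) [Field k] (H : AddSubmonoid ℕ) :
    Subalgebra k (PowerSeries k) where
  carrier := {g | ∀ i : ℕ, i ∉ H → PowerSeries.coeff i g = 0}
  mul_mem' := by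
    intro a b ha hb i hi
    rw [PowerSeries.coeff_mul]
    refine Finset.sum_eq_zero ?_
    rintro ⟨p, q⟩ hpq
    replace hpq : p + q = i := by simpa using hpq
    dsimp only
    by_cases hp : p ∈ H
    · by_cases hq : q ∈ H
      · exact absurd (hpq ▸ H.add_mem hp hq) hi
      · rw [hb q hq, mul_zero]
    · rw [ha p hp, zero_mul]
  one_mem' := by
    intro i hi
    have h0 : i ≠ 0 := fun h => hi (h ▸ H.zero_mem)
    rw [PowerSeries.coeff_one, if_neg h0]
  add_mem' := by
    intro a b ha hb i hi
    rw [map_add, ha i hi, hb i hi, add_zero]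
  zero_mem' := by
    intro i hi
    rw [map_zero]
  algebraMap_mem' := by
    intro r i hi
    have h0 : i ≠ 0 := fun h => hi (h ▸ H.zero_mem)
    simp only [PowerSeries.algebraMap_apply, PowerSeries.coeff_C, if_neg h0]

/-- The canonical module `ω_H` of `k[[H]]`: the `k[[H]]`-submodule of `k[[t]]`
generated by the monomials `t^(f(H) - x)` for `x ∈ QF(H)`. -/
noncomputable def canonicalModule (k : Type*) [Field k] (H : AddSubmonoid ℕ) :
    Submodule ↥(semigroupAlgebra k H) (PowerSeries k) :=
  Submodule.span ↥(semigroupAlgebra k H)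
    ((fun x => (PowerSeries.X : PowerSeries k) ^ (frobeniusNumber H - x)) '' QF H)


section Aux

variable {k : Type*} [Field k] {H : AddSubmonoid ℕ}

lemma le_frob (hfin : ((H : Set ℕ)ᶜ).Finite) {x : ℕ} (hx : x ∉ H) :
    x ≤ frobeniusNumber H :=
  le_csSup hfin.bddAbove hx

lemma frob_not_mem (hfin : ((H : Set ℕ)ᶜ).Finite) (hne : H ≠ ⊤) :
    frobeniusNumber H ∉ H := by
  have hnonempty : {x : ℕ | x ∉ H}.Nonempty := by
    by_contra h
    apply hne
    ext x
    simp only [AddSubmonoid.mem_top, iff_true]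
    by_contra hx
    exact h ⟨x, hx⟩
  exact Nat.sSup_mem hnonempty hfin.bddAbove

lemma mem_of_frob_lt (hfin : ((H : Set ℕ)ᶜ).Finite) {i : ℕ}
    (hi : frobeniusNumber H < i) : i ∈ H := by
  by_contra h
  exact absurd (le_frob hfin h) (not_le.mpr hi)

lemma one_not_mem (hne : H ≠ ⊤) : (1 : ℕ) ∉ H := by
  intro h1
  apply hne
  ext x
  simp only [AddSubmonoid.mem_top, iff_true]
  have : x • (1 : ℕ) ∈ H := AddSubmonoid.nsmul_mem H h1 x
  simpa using this

lemma frob_pos (hfin : ((H : Set ℕ)ᶜ).Finite) (hne : H ≠ ⊤) :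
    1 ≤ frobeniusNumber H := by
  rcases Nat.eq_zero_or_pos (frobeniusNumber H) with h | h
  · exact absurd (h ▸ H.zero_mem) (frob_not_mem hfin hne)
  · exact h

lemma frob_mem_QF (hfin : ((H : Set ℕ)ᶜ).Finite) (hne : H ≠ ⊤) :
    frobeniusNumber H ∈ QF H := by
  refine ⟨frob_not_mem hfin hne, fun h hh hh0 => ?_⟩
  exact mem_of_frob_lt hfin (by omega)

/-- The submodule of power series with vanishing coefficient at 1. -/
noncomputable def M1 (k : Type*) [Field k] (H : AddSubmonoid ℕ) (hne : H ≠ ⊤) :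
    Submodule ↥(semigroupAlgebra k H) (PowerSeries k) where
  carrier := {g | PowerSeries.coeff 1 g = 0}
  add_mem' := by
    intro a b ha hb
    simp only [Set.mem_setOf_eq, map_add] at *
    rw [ha, hb, add_zero]
  zero_mem' := by simp
  smul_mem' := by
    intro r g hg
    simp only [Set.mem_setOf_eq] at *
    have hr : (r : PowerSeries k) • g = (r : PowerSeries k) * g := rfl
    show PowerSeries.coeff 1 ((r : PowerSeries k) * g) = 0
    rw [PowerSeries.coeff_mul]
    have : Finset.HasAntidiagonal.antidiagonal (1 : ℕ) = ({(0, 1), (1, 0)} : Finset (ℕ × ℕ)) := by decide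
    rw [this]
    have hr1 : PowerSeries.coeff 1 (r : PowerSeries k) = 0 :=
      r.2 1 (one_not_mem hne)
    simp [hg, hr1]

lemma coeff_one_mul_eq_zero (hne : H ≠ ⊤) {a b : PowerSeries k}
    (ha : PowerSeries.coeff 1 a = 0) (hb : PowerSeries.coeff 1 b = 0) :
    PowerSeries.coeff 1 (a * b) = 0 := by
  rw [PowerSeries.coeff_mul]
  have : Finset.HasAntidiagonal.antidiagonal (1 : ℕ) = ({(0, 1), (1, 0)} : Finset (ℕ × ℕ)) := by decide
  rw [this]
  simp [ha, hb]

end Aux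

/-- Let `H ≠ ℕ` be a numerical semigroup with Frobenius number `f` and
`R = k[[H]]`. Then `ω_Hⁿ = k[[t]]` for some `n ≥ 1` if and only if `f - 1 ∈ QF(H)`. -/
theorem stmt8 (k : Type*) [Field k] (H : AddSubmonoid ℕ)
    (hfin : ((H : Set ℕ)ᶜ).Finite) (hne : H ≠ ⊤) :
    (∃ n : ℕ, 1 ≤ n ∧ canonicalModule k H ^ n = ⊤) ↔
      frobeniusNumber H - 1 ∈ QF H := by
  set f := frobeniusNumber H with hf
  have hfQF : f ∈ QF H := frob_mem_QF hfin hne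
  have hfpos : 1 ≤ f := frob_pos hfin hne
  have hone_mem : (1 : PowerSeries k) ∈ canonicalModule k H := by
    have : (1 : PowerSeries k) = (PowerSeries.X : PowerSeries k) ^ (f - f) := by
      simp
    rw [this]
    exact Submodule.subset_span ⟨f, hfQF, rfl⟩
  constructor
  · -- converse: ω^n = ⊤ ⇒ f - 1 ∈ QF H
    rintro ⟨n, hn1, hn⟩
    by_contra hQ
    -- ω ≤ M1
    have homega_le : canonicalModule k H ≤ M1 k H hne := by
      rw [canonicalModule, Submodule.span_le]
      rintro _ ⟨x, hx, rfl⟩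
      show PowerSeries.coeff 1 ((PowerSeries.X : PowerSeries k) ^ (f - x)) = 0
      rw [PowerSeries.coeff_X_pow]
      rw [if_neg]
      intro hfx
      have hxf : x ≤ f := le_frob hfin hx.1
      have : x = f - 1 := by omega
      exact hQ (this ▸ hx)
    have hpow_le : ∀ m : ℕ, 1 ≤ m → canonicalModule k H ^ m ≤ M1 k H hne := by
      intro m hm
      induction m with
      | zero => omega
      | succ m ih =>
        rcases Nat.eq_zero_or_pos m with h0 | hpos
        · subst h0; rw [zero_add, pow_one (canonicalModule k H)]; exact homega_le
        · rw [pow_succ (canonicalModule k H) m]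
          refine Submodule.mul_le.mpr fun a ha b hb => ?_
          exact coeff_one_mul_eq_zero hne (ih hpos ha) (homega_le hb)
    have hX : (PowerSeries.X : PowerSeries k) ∈ M1 k H hne := by
      apply hpow_le n hn1
      rw [hn]
      trivial
    have : PowerSeries.coeff 1 (PowerSeries.X : PowerSeries k) = 0 := hX
    simp at this
  · -- forward: f - 1 ∈ QF H ⇒ ω^f = ⊤
    intro hQ
    refine ⟨f, hfpos, ?_⟩
    have hX_mem : (PowerSeries.X : PowerSeries k) ∈ canonicalModule k H := by
      have : (PowerSeries.X : PowerSeries k) =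
          (PowerSeries.X : PowerSeries k) ^ (f - (f - 1)) := by
        rw [show f - (f - 1) = 1 by omega, pow_one]
      rw [this]
      exact Submodule.subset_span ⟨f - 1, hQ, rfl⟩
    have hone_pow : ∀ m : ℕ, (1 : PowerSeries k) ∈ canonicalModule k H ^ m := by
      intro m
      have := Submodule.pow_mem_pow _ hone_mem m
      simpa using this
    have hXj : ∀ j : ℕ, j ≤ f →
        (PowerSeries.X : PowerSeries k) ^ j ∈ canonicalModule k H ^ f := by
      intro j hj
      have h1 : (PowerSeries.X : PowerSeries k) ^ j ∈ canonicalModule k H ^ j :=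
        Submodule.pow_mem_pow _ hX_mem j
      have h2 := Submodule.mul_mem_mul h1 (hone_pow (f - j))
      rw [mul_one] at h2
      rw [← pow_add (canonicalModule k H) j (f - j)] at h2
      rwa [show j + (f - j) = f by omega] at h2
    rw [eq_top_iff]
    intro g _
    set S : PowerSeries k :=
      ∑ j ∈ Finset.Icc 1 f, PowerSeries.C (PowerSeries.coeff j g) *
        (PowerSeries.X : PowerSeries k) ^ j with hS
    have hgS : g = (g - S) + S := by ring
    rw [hgS]
    refine Submodule.add_mem _ ?_ ?_
    · -- g - S ∈ R, so (g - S) • 1 ∈ ω^f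
      have hmem : g - S ∈ semigroupAlgebra k H := by
        intro i hi
        have hi0 : i ≠ 0 := fun h => hi (h ▸ H.zero_mem)
        have hif : i ≤ f := le_frob hfin hi
        rw [map_sub]
        have hSi : PowerSeries.coeff i S = PowerSeries.coeff i g := by
          rw [hS, map_sum]
          rw [Finset.sum_eq_single i]
          · simp [PowerSeries.coeff_C_mul, PowerSeries.coeff_X_pow]
          · intro j _ hji
            simp [PowerSeries.coeff_C_mul, PowerSeries.coeff_X_pow,
              Ne.symm hji]
          · intro hmem
            exfalso
            apply hmem
            simp only [Finset.mem_Icc]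
            omega
        rw [hSi, sub_self]
      have := Submodule.smul_mem (canonicalModule k H ^ f)
        (⟨g - S, hmem⟩ : ↥(semigroupAlgebra k H)) (hone_pow f)
      have heq : (⟨g - S, hmem⟩ : ↥(semigroupAlgebra k H)) • (1 : PowerSeries k)
          = g - S := by
        show (g - S) * 1 = g - S
        rw [mul_one]
      rwa [heq] at this
    · -- S ∈ ω^f
      refine Submodule.sum_mem _ fun j hj => ?_
      simp only [Finset.mem_Icc] at hj
      have hC : PowerSeries.C (PowerSeries.coeff j g) ∈ semigroupAlgebra k H := by
        intro i hi
        have hi0 : i ≠ 0 := fun h => hi (h ▸ H.zero_mem)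
        simp [PowerSeries.coeff_C, hi0]
      have := Submodule.smul_mem (canonicalModule k H ^ f)
        (⟨_, hC⟩ : ↥(semigroupAlgebra k H)) (hXj j hj.2)
      exact this
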